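/- For finite simple graphs X and Y, there is a graph homomorphism from X to Y if and only if the independence number of the homomorphic product X ⋉ Y equals |V(X)|. -/

import Mathlib

open Matrix Finset

/-- A quantum homomorphism from `X` to `Y`: for some `d ≥ 1` there are complex `d × d`
projectors `E x y` (Hermitian idempotents) with `∑ y, E x y = 1` for every `x`,
`E x y * E x y' = 0` whenever `y ≠ y'`, and `E x y * E x' y' = 0` whenever `x, x'`
are adjacent in `X` and `y, y'` are equal or nonadjacent in `Y`. -/
def IsQuantumHom {V W : Type} [Fintype V] [Fintype W]
    (X : SimpleGraph V) (Y : SimpleGraph W) : Prop :=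
  ∃ d : ℕ, 0 < d ∧ ∃ E : V → W → Matrix (Fin d) (Fin d) ℂ,
    (∀ x y, (E x y).IsHermitian ∧ E x y * E x y = E x y) ∧
    (∀ x, ∑ y, E x y = 1) ∧
    (∀ x y y', y ≠ y' → E x y * E x y' = 0) ∧
    (∀ x x' y y', X.Adj x x' → ¬ Y.Adj y y' → E x y * E x' y' = 0)

/-- The homomorphic product `X ⋉ Y`: distinct vertices `(x,y)` and `(x',y')` are adjacent
iff `x = x'`, or (`x ~ x'` in `X` and `y, y'` are equal or nonadjacent in `Y`). -/
def homProd {V W : Type} (X : SimpleGraph V) (Y : SimpleGraph W) :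
    SimpleGraph (V × W) where
  Adj a b := a ≠ b ∧ (a.1 = b.1 ∨ (X.Adj a.1 b.1 ∧ ¬ Y.Adj a.2 b.2))
  symm := ⟨by
    rintro a b ⟨hne, h⟩
    refine ⟨hne.symm, ?_⟩
    rcases h with h | ⟨h1, h2⟩
    · exact Or.inl h.symm
    · exact Or.inr ⟨h1.symm, fun hb => h2 hb.symm⟩⟩
  loopless := ⟨fun a ha => ha.1 rfl⟩

/-- The independence number: the largest size of a set of pairwise nonadjacent vertices. -/
noncomputable def indepNum {U : Type} [Fintype U] (Z : SimpleGraph U) : ℕ :=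
  sSup {n | ∃ s : Finset U, s.card = n ∧ ∀ a ∈ s, ∀ b ∈ s, a ≠ b → ¬ Z.Adj a b}


/-- `X → Y` iff the independence number of `X ⋉ Y` is `|V(X)|`. -/
theorem hom_iff_indepNum_homProd {V W : Type} [Fintype V] [Fintype W]
    (X : SimpleGraph V) (Y : SimpleGraph W) :
    Nonempty (X →g Y) ↔ indepNum (homProd X Y) = Fintype.card V := by
  classical
  set S : Set ℕ := {n | ∃ s : Finset (V × W), s.card = n ∧
      ∀ a ∈ s, ∀ b ∈ s, a ≠ b → ¬ (homProd X Y).Adj a b} with hS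
  have hub : ∀ n ∈ S, n ≤ Fintype.card V := by
    rintro n ⟨s, rfl, hind⟩
    have hinj : Set.InjOn Prod.fst (s : Set (V × W)) := by
      intro a ha b hb hab
      by_contra hne
      exact hind a ha b hb hne ⟨hne, Or.inl hab⟩
    calc s.card = (s.image Prod.fst).card := (Finset.card_image_of_injOn hinj).symm
      _ ≤ Fintype.card V := Finset.card_le_univ _ |>.trans_eq Finset.card_univ
  have h0 : (0 : ℕ) ∈ S := ⟨∅, by simp, by simp⟩
  constructor
  · rintro ⟨f⟩
    have hmem : Fintype.card V ∈ S := by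
      refine ⟨Finset.univ.image fun x => (x, f x), ?_, ?_⟩
      · rw [Finset.card_image_of_injective _ (fun a b h => congrArg Prod.fst h)]
        exact Finset.card_univ
      · intro a ha b hb hne hadj
        simp only [Finset.mem_image, Finset.mem_univ, true_and] at ha hb
        obtain ⟨x, rfl⟩ := ha
        obtain ⟨x', rfl⟩ := hb
        rcases hadj.2 with h | ⟨h1, h2⟩
        · simp only at h; subst h; exact hne rfl
        · exact h2 (f.map_adj h1)
    exact le_antisymm (csSup_le ⟨0, h0⟩ hub) (le_csSup ⟨_, hub⟩ hmem)
  · intro h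
    have hmem : Fintype.card V ∈ S := by
      have := Nat.sSup_mem ⟨0, h0⟩ ⟨_, hub⟩
      rwa [show sSup S = Fintype.card V from h] at this
    obtain ⟨s, hcard, hind⟩ := hmem
    have hinj : Set.InjOn Prod.fst (s : Set (V × W)) := by
      intro a ha b hb hab
      by_contra hne
      exact hind a ha b hb hne ⟨hne, Or.inl hab⟩
    have himg : s.image Prod.fst = Finset.univ := by
      apply Finset.eq_univ_of_card
      rw [Finset.card_image_of_injOn hinj, hcard]
    have hex : ∀ x : V, ∃ y : W, (x, y) ∈ s := by
      intro x
      have : x ∈ s.image Prod.fst := himg ▸ Finset.mem_univ x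
      obtain ⟨a, ha, ha1⟩ := Finset.mem_image.mp this
      subst ha1; exact ⟨a.2, ha⟩
    refine ⟨⟨fun x => (hex x).choose, ?_⟩⟩
    intro x x' hadj
    by_contra hY
    have hx := (hex x).choose_spec
    have hx' := (hex x').choose_spec
    have hne : (x, (hex x).choose) ≠ (x', (hex x').choose) :=
      fun he => hadj.ne (congrArg Prod.fst he)
    exact hind _ hx _ hx' hne ⟨hne, Or.inr ⟨hadj, hY⟩⟩
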